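/- Let V be a type and let d : V → V → ℝ satisfy the directed triangle inequality d(a,c) ≤ d(a,b) + d(b,c) for all a,b,c ∈ V. Suppose vertices r₂, v, u, r₁ ∈ V satisfy: (i) 2·d(r₂,u) + d(u,r₁) ≥ 2·d(r₂,r₁) + d(r₁,u), and (ii) 4·d(r₂,r₁) + d(r₁,v) > 4·d(r₂,v) + 3·d(v,r₁). Then d(v,r₁) + d(r₁,v) < 4·(d(v,u) + d(u,v)). -/
import Mathlib


/-- 4-Approximation Filtering Lemma (Lemma 5.9): if
(i) `2·d(r₂,u) + d(u,r₁) ≥ 2·d(r₂,r₁) + d(r₁,u)` and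
(ii) `4·d(r₂,r₁) + d(r₁,v) > 4·d(r₂,v) + 3·d(v,r₁)`,
then `d(v⇌r₁) < 4·d(v⇌u)`. -/
theorem four_approx_filtering {V : Type*} (d : V → V → ℝ)
    (htri : ∀ a b c : V, d a c ≤ d a b + d b c)
    (r₂ v u r₁ : V)
    (h1 : 2 * d r₂ u + d u r₁ ≥ 2 * d r₂ r₁ + d r₁ u)
    (h2 : 4 * d r₂ r₁ + d r₁ v > 4 * d r₂ v + 3 * d v r₁) :
    d v r₁ + d r₁ v < 4 * (d v u + d u v) := by
  linarith [htri r₂ v u, htri u v r₁, htri r₁ u v]
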